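/- arXiv:2405.16900 — 2 statements merged into one kernel-verified Lean document; each statement's English description precedes it below -/
import Mathlib

section
/- For any X, Y ∈ St(n,r) and any v ∈ T_X, the polar retraction is non-expansive in the sense that ‖R_X(v) − Y‖_F² ≤ ‖X + v − Y‖_F². -/
set_option maxHeartbeats 1000000

open Matrix
open scoped BigOperators

attribute [local instance] Matrix.frobeniusNormedAddCommGroup Matrix.frobeniusNormedSpace

noncomputable section

/-- the Frobenius norm of a real matrix -/
def frob {n r : ℕ} (A : Matrix (Fin n) (Fin r) ℝ) : ℝ :=
  Real.sqrt (∑ i, ∑ j, (A i j) ^ 2)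

/-- the Stiefel manifold St(n,r) -/
def Stiefel (n r : ℕ) : Set (Matrix (Fin n) (Fin r) ℝ) := {X | Xᵀ * X = 1}

/-- the tangent space of St(n,r) at X -/
def Tang {n r : ℕ} (X : Matrix (Fin n) (Fin r) ℝ) : Set (Matrix (Fin n) (Fin r) ℝ) :=
  {u | Xᵀ * u + uᵀ * X = 0}

lemma psd_one_add_sq {n r : ℕ} (v : Matrix (Fin n) (Fin r) ℝ) :
    (1 + vᵀ * v).PosSemidef := by
  have h := (Matrix.PosDef.one (n := Fin r) (R := ℝ)).posSemidef.add
    (Matrix.posSemidef_conjTranspose_mul_self v)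
  simpa using h

/-- the square root of a positive semidefinite matrix (removed from Mathlib; old definition) -/
def Matrix.PosSemidef.sqrt {n : Type*} [Fintype n] [DecidableEq n] {A : Matrix n n ℝ}
    (hA : A.PosSemidef) : Matrix n n ℝ :=
  hA.1.eigenvectorUnitary.1 * diagonal ((↑) ∘ (√·) ∘ hA.1.eigenvalues) *
    (star hA.1.eigenvectorUnitary : Matrix n n ℝ)

lemma Matrix.PosSemidef.sqrt_mul_self' {n : Type*} [Fintype n] [DecidableEq n] {A : Matrix n n ℝ}
    (hA : A.PosSemidef) : hA.sqrt * hA.sqrt = A := by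
  conv_rhs => rw [hA.1.spectral_theorem, Unitary.conjStarAlgAut_apply]
  have hU : (star hA.1.eigenvectorUnitary : Matrix n n ℝ) * hA.1.eigenvectorUnitary.1 = 1 :=
    Unitary.coe_star_mul_self _
  simp only [Matrix.PosSemidef.sqrt]
  rw [show ∀ a b c d e f : Matrix n n ℝ, a * b * c * (d * e * f) = a * b * (c * d) * e * f from
    fun a b c d e f => by simp only [Matrix.mul_assoc], hU, Matrix.mul_one, Matrix.mul_assoc (hA.1.eigenvectorUnitary.1 : Matrix n n ℝ), diagonal_mul_diagonal]
  congr 3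
  funext i
  simp [Real.mul_self_sqrt (hA.eigenvalues_nonneg i)]

lemma Matrix.PosSemidef.posSemidef_sqrt' {n : Type*} [Fintype n] [DecidableEq n] {A : Matrix n n ℝ}
    (hA : A.PosSemidef) : hA.sqrt.PosSemidef := by
  have hD : (diagonal ((↑) ∘ (√·) ∘ hA.1.eigenvalues) : Matrix n n ℝ).PosSemidef :=
    PosSemidef.diagonal fun i => by simp [Real.sqrt_nonneg]
  have := hD.mul_mul_conjTranspose_same hA.1.eigenvectorUnitary.1
  simpa [Matrix.PosSemidef.sqrt, Matrix.star_eq_conjTranspose] using this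

lemma Matrix.posSemidef_eq_transpose_mul_self' {n : Type*} [Fintype n] [DecidableEq n] {A : Matrix n n ℝ}
    (hA : A.PosSemidef) : ∃ B : Matrix n n ℝ, A = Bᴴ * B := by
  refine ⟨hA.sqrt, ?_⟩
  have h := hA.posSemidef_sqrt'.isHermitian
  rw [h.eq, hA.sqrt_mul_self']

/-- the polar retraction R_X(v) = (X+v)(I + vᵀv)^{-1/2} -/
def polarRetract {n r : ℕ} (X v : Matrix (Fin n) (Fin r) ℝ) : Matrix (Fin n) (Fin r) ℝ :=
  (X + v) * ((psd_one_add_sq v).sqrt)⁻¹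

/-! ### auxiliary lemmas -/

lemma trace_tmul_nonneg {n r : ℕ} (A : Matrix (Fin n) (Fin r) ℝ) :
    0 ≤ trace (Aᵀ * A) := by
  rw [Matrix.trace]
  refine Finset.sum_nonneg fun j _ => ?_
  rw [Matrix.diag_apply, Matrix.mul_apply]
  exact Finset.sum_nonneg fun i _ => by
    simpa [Matrix.transpose_apply] using mul_self_nonneg (A i j)

lemma trace_expand {n r : ℕ} (P Q : Matrix (Fin n) (Fin r) ℝ) :
    trace ((P - Q)ᵀ * (P - Q))
      = trace (Pᵀ * P) - 2 * trace (Pᵀ * Q) + trace (Qᵀ * Q) := by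
  have h : trace (Qᵀ * P) = trace (Pᵀ * Q) := by
    rw [← Matrix.trace_transpose (Qᵀ * P), Matrix.transpose_mul, Matrix.transpose_transpose]
  rw [Matrix.transpose_sub, Matrix.sub_mul, Matrix.mul_sub, Matrix.mul_sub,
    Matrix.trace_sub, Matrix.trace_sub, Matrix.trace_sub, h]
  ring

lemma trace_amgm {n r : ℕ} (P Q : Matrix (Fin n) (Fin r) ℝ) :
    2 * trace (Pᵀ * Q) ≤ trace (Pᵀ * P) + trace (Qᵀ * Q) := by
  have h := trace_tmul_nonneg (P - Q)
  rw [trace_expand] at h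
  linarith

lemma dp_amgm {r : ℕ} (u w : Fin r → ℝ) :
    2 * (u ⬝ᵥ w) ≤ u ⬝ᵥ u + w ⬝ᵥ w := by
  have h : (0:ℝ) ≤ (u - w) ⬝ᵥ (u - w) :=
    Finset.sum_nonneg fun i _ => mul_self_nonneg _
  have h2 : (u - w) ⬝ᵥ (u - w) = u ⬝ᵥ u - 2 * (u ⬝ᵥ w) + w ⬝ᵥ w := by
    rw [sub_dotProduct, dotProduct_sub, dotProduct_sub,
      dotProduct_comm w u]
    ring
  linarith [h2 ▸ h]

lemma frob_sq_eq_trace {n r : ℕ} (A : Matrix (Fin n) (Fin r) ℝ) :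
    frob A ^ 2 = trace (Aᵀ * A) := by
  have h0 : (0:ℝ) ≤ ∑ i, ∑ j, (A i j) ^ 2 :=
    Finset.sum_nonneg fun i _ => Finset.sum_nonneg fun j _ => sq_nonneg _
  rw [frob, Real.sq_sqrt h0, Matrix.trace]
  rw [Finset.sum_comm]
  refine Finset.sum_congr rfl fun j _ => ?_
  rw [Matrix.diag_apply, Matrix.mul_apply]
  exact Finset.sum_congr rfl fun i _ => by
    rw [Matrix.transpose_apply]; ring

lemma dp_collapse {m r : ℕ} (B : Matrix (Fin m) (Fin r) ℝ) (a b : Fin r → ℝ) :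
    (B *ᵥ a) ⬝ᵥ (B *ᵥ b) = a ⬝ᵥ ((Bᵀ * B) *ᵥ b) := by
  rw [show B *ᵥ a = a ᵥ* Bᵀ from (Matrix.vecMul_transpose B a).symm,
    Matrix.dotProduct_mulVec, Matrix.vecMul_vecMul, ← Matrix.dotProduct_mulVec]

/-- quadratic-form version of `S ⪰ 1` for `S` a psd square root of `M ⪰ 1`. -/
lemma sqrt_ge_one {r : ℕ} {M S : Matrix (Fin r) (Fin r) ℝ}
    (hMform : ∀ x : Fin r → ℝ, x ⬝ᵥ x ≤ x ⬝ᵥ (M *ᵥ x))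
    (hSsym : Sᵀ = S) (hSS : S * S = M) (hdet : IsUnit S.det)
    (hSinvPsd : (S⁻¹).PosSemidef) :
    ∀ x : Fin r → ℝ, x ⬝ᵥ x ≤ x ⬝ᵥ (S *ᵥ x) := by
  intro x
  have hSinvS : S⁻¹ * S = 1 := Matrix.nonsing_inv_mul S hdet
  have hSSinv : S * S⁻¹ = 1 := Matrix.mul_nonsing_inv S hdet
  -- step a : ‖S⁻¹ y‖² ≤ ‖y‖²
  have stepa : ∀ y : Fin r → ℝ, (S⁻¹ *ᵥ y) ⬝ᵥ (S⁻¹ *ᵥ y) ≤ y ⬝ᵥ y := by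
    intro y
    have h1 := hMform (S⁻¹ *ᵥ y)
    have h2 : (S *ᵥ (S⁻¹ *ᵥ y)) ⬝ᵥ (S *ᵥ (S⁻¹ *ᵥ y))
        = (S⁻¹ *ᵥ y) ⬝ᵥ (M *ᵥ (S⁻¹ *ᵥ y)) := by
      rw [dp_collapse, hSsym, hSS]
    have h3 : S *ᵥ (S⁻¹ *ᵥ y) = y := by
      rw [Matrix.mulVec_mulVec, hSSinv, Matrix.one_mulVec]
    rw [h3] at h2
    calc (S⁻¹ *ᵥ y) ⬝ᵥ (S⁻¹ *ᵥ y) ≤ (S⁻¹ *ᵥ y) ⬝ᵥ (M *ᵥ (S⁻¹ *ᵥ y)) := h1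
      _ = y ⬝ᵥ y := h2.symm
  -- step b : x ⬝ᵥ S⁻¹ x ≤ x ⬝ᵥ x
  have stepb : x ⬝ᵥ (S⁻¹ *ᵥ x) ≤ x ⬝ᵥ x := by
    have := dp_amgm x (S⁻¹ *ᵥ x)
    have := stepa x
    linarith
  -- step c : main inequality via a psd decomposition of S⁻¹
  obtain ⟨C, hC⟩ := Matrix.posSemidef_eq_transpose_mul_self' hSinvPsd
  rw [Matrix.conjTranspose_eq_transpose_of_trivial] at hC
  have hu : (C *ᵥ x) ⬝ᵥ (C *ᵥ x) = x ⬝ᵥ (S⁻¹ *ᵥ x) := by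
    rw [dp_collapse, ← hC]
  have huw : (C *ᵥ x) ⬝ᵥ (C *ᵥ (S *ᵥ x)) = x ⬝ᵥ x := by
    rw [dp_collapse, ← hC, Matrix.mulVec_mulVec, hSinvS, Matrix.one_mulVec]
  have hw : (C *ᵥ (S *ᵥ x)) ⬝ᵥ (C *ᵥ (S *ᵥ x)) = x ⬝ᵥ (S *ᵥ x) := by
    rw [dp_collapse, ← hC, Matrix.mulVec_mulVec, hSinvS, Matrix.one_mulVec,
      dotProduct_comm]
  have := dp_amgm (C *ᵥ x) (C *ᵥ (S *ᵥ x))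
  rw [hu, huw, hw] at this
  linarith

/-- non-expansiveness of the polar retraction:
for `X, Y ∈ St(n,r)` and `v ∈ T_X`, `‖R_X(v) − Y‖_F² ≤ ‖X + v − Y‖_F²`. -/
theorem polarRetract_nonexpansive {n r : ℕ}
    (X Y v : Matrix (Fin n) (Fin r) ℝ)
    (hX : X ∈ Stiefel n r) (hY : Y ∈ Stiefel n r) (hv : v ∈ Tang X) :
    frob (polarRetract X v - Y) ^ 2 ≤ frob (X + v - Y) ^ 2 := by
  have hX' : Xᵀ * X = 1 := hX
  have hY' : Yᵀ * Y = 1 := hY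
  have hv' : Xᵀ * v + vᵀ * X = 0 := hv
  set M : Matrix (Fin r) (Fin r) ℝ := 1 + vᵀ * v with hMdef
  have hM : M.PosSemidef := psd_one_add_sq v
  set S : Matrix (Fin r) (Fin r) ℝ := hM.sqrt with hSdef
  have hSpsd : S.PosSemidef := hM.posSemidef_sqrt'
  have hSsym : Sᵀ = S := by
    have := hSpsd.isHermitian
    rwa [Matrix.IsHermitian, Matrix.conjTranspose_eq_transpose_of_trivial] at this
  have hSS : S * S = M := hM.sqrt_mul_self'
  -- M is positive definite, so S is invertible
  have hMpd : M.PosDef := by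
    have := (Matrix.PosDef.one (n := Fin r) (R := ℝ)).add_posSemidef
      (Matrix.posSemidef_conjTranspose_mul_self v)
    simpa [hMdef] using this
  have hdet : IsUnit S.det := by
    have hdM : 0 < M.det := hMpd.det_pos
    rw [← hSS, Matrix.det_mul] at hdM
    have : S.det ≠ 0 := by
      intro h; rw [h] at hdM; simpa using hdM
    exact this.isUnit
  have hSinvS : S⁻¹ * S = 1 := Matrix.nonsing_inv_mul S hdet
  have hSSinv : S * S⁻¹ = 1 := Matrix.mul_nonsing_inv S hdet
  have hSinvSym : (S⁻¹)ᵀ = S⁻¹ := by rw [Matrix.transpose_nonsing_inv, hSsym]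
  have hSinvPsd : (S⁻¹).PosSemidef := by
    have h := hSpsd.conjTranspose_mul_mul_same S⁻¹
    have he : (S⁻¹)ᴴ * S * S⁻¹ = S⁻¹ := by
      rw [Matrix.conjTranspose_eq_transpose_of_trivial, hSinvSym, Matrix.mul_assoc,
        hSSinv, Matrix.mul_one]
    rwa [he] at h
  set A : Matrix (Fin n) (Fin r) ℝ := X + v with hAdef
  have hAA : Aᵀ * A = S * S := by
    rw [hSS, hAdef, Matrix.transpose_add, Matrix.add_mul, Matrix.mul_add, Matrix.mul_add,
      hX', hMdef]
    have h2 : Xᵀ * v = -(vᵀ * X) := eq_neg_of_add_eq_zero_left hv'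
    rw [h2]; abel
  set R : Matrix (Fin n) (Fin r) ℝ := A * S⁻¹ with hRdef
  have hpr : polarRetract X v = R := rfl
  have hRT : Rᵀ = S⁻¹ * Aᵀ := by
    rw [hRdef, Matrix.transpose_mul, hSinvSym]
  have hRR : Rᵀ * R = 1 := by
    rw [hRT, hRdef, Matrix.mul_assoc, ← Matrix.mul_assoc Aᵀ, hAA,
      ← Matrix.mul_assoc, ← Matrix.mul_assoc, hSinvS, Matrix.one_mul, hSSinv]
  have hARS : A = R * S := by
    rw [hRdef, Matrix.mul_assoc, hSinvS, Matrix.mul_one]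
  -- quadratic form of M dominates identity
  have hMform : ∀ x : Fin r → ℝ, x ⬝ᵥ x ≤ x ⬝ᵥ (M *ᵥ x) := by
    intro x
    have : x ⬝ᵥ (M *ᵥ x) = x ⬝ᵥ x + (v *ᵥ x) ⬝ᵥ (v *ᵥ x) := by
      rw [hMdef, Matrix.add_mulVec, dotProduct_add, Matrix.one_mulVec,
        dp_collapse v x x]
    have h0 : (0:ℝ) ≤ (v *ᵥ x) ⬝ᵥ (v *ᵥ x) :=
      Finset.sum_nonneg fun i _ => mul_self_nonneg _
    linarith [this]
  have hSform := sqrt_ge_one hMform hSsym hSS hdet hSinvPsd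
  -- S - 1 is psd, get decomposition
  have hTpsd : (S - 1).PosSemidef := by
    rw [Matrix.posSemidef_iff_dotProduct_mulVec]
    constructor
    · rw [Matrix.IsHermitian, Matrix.conjTranspose_eq_transpose_of_trivial,
        Matrix.transpose_sub, hSsym, Matrix.transpose_one]
    · intro x
      have := hSform x
      simp only [Matrix.sub_mulVec, dotProduct_sub, Matrix.one_mulVec]
      simpa using sub_nonneg.mpr this
  obtain ⟨D, hD⟩ := Matrix.posSemidef_eq_transpose_mul_self' hTpsd
  rw [Matrix.conjTranspose_eq_transpose_of_trivial] at hD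
  -- key trace inequality : trace ((S-1) * (Rᵀ * Y)) ≤ trace (S-1)
  have hkey : trace ((S - 1) * (Rᵀ * Y)) ≤ trace (S - 1) := by
    have e1 : trace ((S - 1) * (Rᵀ * Y)) = trace ((R * Dᵀ)ᵀ * (Y * Dᵀ)) := by
      rw [hD, show (R * Dᵀ)ᵀ * (Y * Dᵀ) = D * (Rᵀ * Y) * Dᵀ from by
        rw [Matrix.transpose_mul, Matrix.transpose_transpose]; simp only [Matrix.mul_assoc],
        Matrix.trace_mul_cycle, Matrix.trace_mul_cycle, Matrix.mul_assoc]
    have e2 : trace ((R * Dᵀ)ᵀ * (R * Dᵀ)) = trace (S - 1) := by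
      rw [Matrix.transpose_mul, Matrix.transpose_transpose, Matrix.mul_assoc,
        ← Matrix.mul_assoc Rᵀ, hRR, Matrix.one_mul, Matrix.trace_mul_comm, hD]
    have e3 : trace ((Y * Dᵀ)ᵀ * (Y * Dᵀ)) = trace (S - 1) := by
      rw [Matrix.transpose_mul, Matrix.transpose_transpose, Matrix.mul_assoc,
        ← Matrix.mul_assoc Yᵀ, hY', Matrix.one_mul, Matrix.trace_mul_comm, hD]
    have := trace_amgm (R * Dᵀ) (Y * Dᵀ)
    rw [e2, e3] at this
    rw [e1]
    linarith
  -- trace of (S-1)² is nonneg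
  have hsq : 0 ≤ trace ((S - 1)ᵀ * (S - 1)) := trace_tmul_nonneg (S - 1)
  have hsq' : trace ((S - 1)ᵀ * (S - 1))
      = trace (S * S) - 2 * trace S + trace (1 : Matrix (Fin r) (Fin r) ℝ) := by
    rw [Matrix.transpose_sub, hSsym, Matrix.transpose_one, Matrix.sub_mul, Matrix.mul_sub,
      Matrix.mul_sub, Matrix.trace_sub, Matrix.trace_sub, Matrix.trace_sub,
      Matrix.one_mul, Matrix.mul_one, Matrix.one_mul]
    ring
  -- final computation
  rw [hpr, frob_sq_eq_trace, frob_sq_eq_trace]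
  rw [trace_expand R Y, trace_expand A Y]
  rw [hRR, hAA, hY']
  have hAY : trace (Aᵀ * Y) = trace (S * (Rᵀ * Y)) := by
    rw [hARS, Matrix.transpose_mul, hSsym, Matrix.mul_assoc]
  rw [hAY]
  have hexp1 : trace ((S - 1) * (Rᵀ * Y)) = trace (S * (Rᵀ * Y)) - trace (Rᵀ * Y) := by
    rw [Matrix.sub_mul, Matrix.trace_sub, Matrix.one_mul]
  have hexp2 : trace (S - 1) = trace S - trace (1 : Matrix (Fin r) (Fin r) ℝ) := by
    rw [Matrix.trace_sub]
  rw [hexp1, hexp2] at hkey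
  linarith

end
end

section
/- Let W ∈ ℝ^{N×N} be symmetric and doubly stochastic, t ≥ 1 an integer, and let σ₂ denote the spectral norm of W − (1/N)𝟙𝟙ᵀ. Let F_{i,k} ∈ ℝ^{n×r} be arbitrary matrices, Y_{i,0} := F_{i,0}, and Y_{i,k+1} := Σ_j (W^t)_{ij} Y_{j,k} + F_{i,k+1} − F_{i,k}. Write F̄_k := (1/N)Σ_i F_{i,k}. Then for all k ≥ 0: (Σ_i ‖Y_{i,k+1} − F̄_{k+1}‖_F²)^{1/2} ≤ σ₂^t (Σ_i ‖Y_{i,k} − F̄_k‖_F²)^{1/2} + (Σ_i ‖F_{i,k+1} − F_{i,k}‖_F²)^{1/2}. -/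
open Matrix
open scoped BigOperators

noncomputable section

/-- the spectral norm (operator 2-norm) of a matrix -/
def spec {m k : ℕ} (A : Matrix (Fin m) (Fin k) ℝ) : ℝ :=
  ‖LinearMap.toContinuousLinearMap (Matrix.toEuclideanLin A)‖

lemma sqrtSum_eq_norm {ι : Type*} [Fintype ι] (f : ι → ℝ) :
    Real.sqrt (∑ i, f i ^ 2) = ‖(WithLp.equiv 2 (ι → ℝ)).symm f‖ := by
  rw [EuclideanSpace.norm_eq]
  congr 1
  refine Finset.sum_congr rfl fun i _ => ?_
  rw [show ((WithLp.equiv 2 (ι → ℝ)).symm f).ofLp i = f i from rfl, Real.norm_eq_abs, sq_abs]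

lemma sqrt_sum_sq_add_le {ι : Type*} [Fintype ι] (f g : ι → ℝ) :
    Real.sqrt (∑ i, (f i + g i) ^ 2) ≤
      Real.sqrt (∑ i, f i ^ 2) + Real.sqrt (∑ i, g i ^ 2) := by
  rw [sqrtSum_eq_norm, sqrtSum_eq_norm, sqrtSum_eq_norm]
  have h : (WithLp.equiv 2 (ι → ℝ)).symm (fun i => f i + g i)
      = (WithLp.equiv 2 (ι → ℝ)).symm f + (WithLp.equiv 2 (ι → ℝ)).symm g := by
    rfl
  rw [h]
  exact norm_add_le _ _

lemma mulVec_norm_le {N : ℕ} (W : Matrix (Fin N) (Fin N) ℝ)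
    (v : Fin N → ℝ) (hv : ∑ j, v j = 0) :
    Real.sqrt (∑ i, (W *ᵥ v) i ^ 2) ≤
      spec (W - (N : ℝ)⁻¹ • Matrix.of (fun _ _ => (1:ℝ))) * Real.sqrt (∑ j, v j ^ 2) := by
  set M := W - (N : ℝ)⁻¹ • Matrix.of (fun _ _ => (1:ℝ)) with hM
  have h1 : M *ᵥ v = W *ᵥ v := by
    rw [hM, Matrix.sub_mulVec]
    have : (((N : ℝ)⁻¹ • Matrix.of (fun _ _ => (1:ℝ)) : Matrix (Fin N) (Fin N) ℝ)) *ᵥ v = 0 := by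
      funext i
      simp [Matrix.mulVec, dotProduct, ← Finset.mul_sum, hv]
    rw [this, sub_zero]
  rw [← h1, sqrtSum_eq_norm, sqrtSum_eq_norm]
  have h2 := (LinearMap.toContinuousLinearMap (Matrix.toEuclideanLin M)).le_opNorm
      ((WithLp.equiv 2 (Fin N → ℝ)).symm v)
  rw [LinearMap.coe_toContinuousLinearMap', WithLp.equiv_symm_apply,
    Matrix.toEuclideanLin_apply_piLp_toLp] at h2
  exact h2

lemma pow_mulVec_bound {N : ℕ} (W : Matrix (Fin N) (Fin N) ℝ)
    (hcol : ∀ j, ∑ i, W i j = 1) (σ₂ : ℝ)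
    (hσ₂ : σ₂ = spec (W - (N : ℝ)⁻¹ • Matrix.of (fun _ _ => (1:ℝ)))) (t : ℕ) :
    ∀ v : Fin N → ℝ, (∑ j, v j = 0) →
      Real.sqrt (∑ i, ((W ^ t) *ᵥ v) i ^ 2) ≤ σ₂ ^ t * Real.sqrt (∑ j, v j ^ 2) := by
  have hσnn : 0 ≤ σ₂ := hσ₂ ▸ norm_nonneg _
  induction t with
  | zero => intro v hv; simp [Matrix.one_mulVec]
  | succ s ih =>
    intro v hv
    have hWv : ∑ i, (W *ᵥ v) i = 0 := by
      simp only [Matrix.mulVec, dotProduct]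
      rw [Finset.sum_comm]
      simp_rw [← Finset.sum_mul, hcol, one_mul, hv]
    have h1 : (W ^ (s+1)) *ᵥ v = (W ^ s) *ᵥ (W *ᵥ v) := by
      rw [pow_succ, ← Matrix.mulVec_mulVec]
    rw [h1]
    calc Real.sqrt (∑ i, ((W ^ s) *ᵥ (W *ᵥ v)) i ^ 2)
        ≤ σ₂ ^ s * Real.sqrt (∑ i, (W *ᵥ v) i ^ 2) := ih _ hWv
      _ ≤ σ₂ ^ s * (σ₂ * Real.sqrt (∑ j, v j ^ 2)) := by
          refine mul_le_mul_of_nonneg_left ?_ (pow_nonneg hσnn s)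
          rw [hσ₂]; exact mulVec_norm_le W v hv
      _ = σ₂ ^ (s+1) * Real.sqrt (∑ j, v j ^ 2) := by ring

lemma pow_mulVec_bound_sq {N : ℕ} (W : Matrix (Fin N) (Fin N) ℝ)
    (hcol : ∀ j, ∑ i, W i j = 1) (σ₂ : ℝ)
    (hσ₂ : σ₂ = spec (W - (N : ℝ)⁻¹ • Matrix.of (fun _ _ => (1:ℝ)))) (t : ℕ)
    (v : Fin N → ℝ) (hv : ∑ j, v j = 0) :
    ∑ i, ((W ^ t) *ᵥ v) i ^ 2 ≤ (σ₂ ^ t) ^ 2 * ∑ j, v j ^ 2 := by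
  have h := pow_mulVec_bound W hcol σ₂ hσ₂ t v hv
  have h2 := pow_le_pow_left₀ (Real.sqrt_nonneg _) h 2
  rwa [Real.sq_sqrt (by positivity), mul_pow, Real.sq_sqrt (by positivity)] at h2

lemma centering_sum_sq {N : ℕ} (x : Fin N → ℝ) :
    ∑ i, (x i - (N : ℝ)⁻¹ * ∑ j, x j) ^ 2 ≤ ∑ i, x i ^ 2 := by
  rcases Nat.eq_zero_or_pos N with h | h
  · subst h; simp
  set m := (N : ℝ)⁻¹ * ∑ j, x j with hm
  have hN : (N : ℝ) ≠ 0 := Nat.cast_ne_zero.2 h.ne'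
  have hsum : ∑ j, x j = (N : ℝ) * m := by rw [hm]; field_simp
  have hexp : ∑ i, (x i - m) ^ 2 = (∑ i, x i ^ 2) - (N : ℝ) * m ^ 2 := by
    have : ∀ i : Fin N, (x i - m) ^ 2 = x i ^ 2 - 2 * m * x i + m ^ 2 := fun i => by ring
    rw [Finset.sum_congr rfl fun i _ => this i]
    rw [Finset.sum_add_distrib, Finset.sum_sub_distrib, ← Finset.mul_sum, hsum,
      Finset.sum_const, Finset.card_univ, Fintype.card_fin, nsmul_eq_mul]
    ring
  rw [hexp]
  nlinarith [sq_nonneg m, Nat.cast_nonneg (α := ℝ) N]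

lemma rowsum_pow {N : ℕ} (W : Matrix (Fin N) (Fin N) ℝ)
    (hrow : ∀ i, ∑ j, W i j = 1) (t : ℕ) : ∀ i, ∑ j, (W ^ t) i j = 1 := by
  induction t with
  | zero => intro i; simp [Matrix.one_apply]
  | succ s ih =>
    intro i
    rw [pow_succ]
    simp only [Matrix.mul_apply]
    rw [Finset.sum_comm]
    simp_rw [← Finset.mul_sum, hrow, mul_one, ih]

lemma colsum_pow {N : ℕ} (W : Matrix (Fin N) (Fin N) ℝ)
    (hcol : ∀ j, ∑ i, W i j = 1) (t : ℕ) : ∀ j, ∑ i, (W ^ t) i j = 1 := by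
  induction t with
  | zero => intro j; simp [Matrix.one_apply]
  | succ s ih =>
    intro j
    rw [pow_succ']
    simp only [Matrix.mul_apply]
    rw [Finset.sum_comm]
    simp_rw [← Finset.sum_mul, hcol, one_mul, ih]

lemma sum_frob_sq {n r N : ℕ} (X : Fin N → Matrix (Fin n) (Fin r) ℝ) :
    ∑ i, frob (X i) ^ 2 = ∑ p : Fin N × Fin n × Fin r, (X p.1 p.2.1 p.2.2) ^ 2 := by
  rw [Fintype.sum_prod_type]
  refine Finset.sum_congr rfl fun i _ => ?_
  rw [Fintype.sum_prod_type, frob, Real.sq_sqrt (by positivity)]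
/-- one-step contraction of the gradient-tracking error: with
`σ₂ = ‖W − (1/N)𝟙𝟙ᵀ‖₂`, `Y_{i,0} = F_{i,0}`,
`Y_{i,k+1} = Σ_j (Wᵗ)_{ij} Y_{j,k} + F_{i,k+1} − F_{i,k}` and `F̄_k = (1/N)Σ_i F_{i,k}`,
`(Σ_i ‖Y_{i,k+1} − F̄_{k+1}‖²)^{1/2} ≤ σ₂ᵗ (Σ_i ‖Y_{i,k} − F̄_k‖²)^{1/2}
  + (Σ_i ‖F_{i,k+1} − F_{i,k}‖²)^{1/2}`. -/
theorem gradient_tracking_error_contraction {n r N : ℕ}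
    (W : Matrix (Fin N) (Fin N) ℝ)
    (hsymm : W.IsSymm)
    (hrow : ∀ i, ∑ j, W i j = 1) (hcol : ∀ j, ∑ i, W i j = 1)
    (t : ℕ) (ht : 1 ≤ t)
    (σ₂ : ℝ) (hσ₂ : σ₂ = spec (W - (N : ℝ)⁻¹ • Matrix.of (fun _ _ => (1 : ℝ))))
    (F Y : ℕ → Fin N → Matrix (Fin n) (Fin r) ℝ)
    (hY0 : ∀ i, Y 0 i = F 0 i)
    (hYrec : ∀ k i, Y (k + 1) i = (∑ j, (W ^ t) i j • Y k j) + F (k + 1) i - F k i)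
    (Fbar : ℕ → Matrix (Fin n) (Fin r) ℝ)
    (hFbar : ∀ k, Fbar k = (N : ℝ)⁻¹ • ∑ i, F k i) :
    ∀ k, Real.sqrt (∑ i, frob (Y (k + 1) i - Fbar (k + 1)) ^ 2) ≤
      σ₂ ^ t * Real.sqrt (∑ i, frob (Y k i - Fbar k) ^ 2) +
        Real.sqrt (∑ i, frob (F (k + 1) i - F k i) ^ 2) := by
  intro k
  have hσnn : 0 ≤ σ₂ := hσ₂ ▸ norm_nonneg _
  rcases Nat.eq_zero_or_pos N with hN | hN
  · subst hN
    simp [mul_nonneg (pow_nonneg hσnn t)]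
  -- sum of Y equals sum of F
  have hsumY : ∀ m, ∑ i, Y m i = ∑ i, F m i := by
    intro m
    induction m with
    | zero => exact Finset.sum_congr rfl fun i _ => hY0 i
    | succ m ih =>
      calc ∑ i, Y (m+1) i
          = ∑ i, ((∑ j, (W ^ t) i j • Y m j) + F (m+1) i - F m i) :=
            Finset.sum_congr rfl fun i _ => hYrec m i
        _ = ((∑ i, ∑ j, (W ^ t) i j • Y m j) + ∑ i, F (m+1) i) - ∑ i, F m i := by
            rw [Finset.sum_sub_distrib, Finset.sum_add_distrib]
        _ = ((∑ j, Y m j) + ∑ i, F (m+1) i) - ∑ i, F m i := by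
            congr 2
            rw [Finset.sum_comm]
            simp_rw [← Finset.sum_smul, colsum_pow W hcol t, one_smul]
        _ = ∑ i, F (m+1) i := by rw [ih]; abel
  have he : ∑ j, (Y k j - Fbar k) = 0 := by
    rw [Finset.sum_sub_distrib, hsumY, hFbar, Finset.sum_const, Finset.card_univ,
      Fintype.card_fin, ← Nat.cast_smul_eq_nsmul ℝ, smul_smul,
      mul_inv_cancel₀ (Nat.cast_ne_zero.2 hN.ne'), one_smul, sub_self]
  have hrowt := rowsum_pow W hrow t
  have hdec : ∀ i, Y (k+1) i - Fbar (k+1) =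
      (∑ j, (W ^ t) i j • (Y k j - Fbar k)) +
        ((F (k+1) i - F k i) - (Fbar (k+1) - Fbar k)) := by
    intro i
    rw [hYrec]
    have h3 : ∑ j, (W ^ t) i j • Y k j
        = (∑ j, (W ^ t) i j • (Y k j - Fbar k)) + Fbar k := by
      simp_rw [smul_sub]
      rw [Finset.sum_sub_distrib, ← Finset.sum_smul, hrowt i, one_smul]
      abel
    rw [h3]
    abel
  set E : Fin N × Fin n × Fin r → ℝ :=
    fun p => (Y k p.1 - Fbar k) p.2.1 p.2.2 with hE
  set G : Fin N × Fin n × Fin r → ℝ :=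
    fun p => ∑ j, (W ^ t) p.1 j * E (j, p.2) with hG
  set D : Fin N × Fin n × Fin r → ℝ :=
    fun p => ((F (k+1) p.1 - F k p.1) - (Fbar (k+1) - Fbar k)) p.2.1 p.2.2 with hD
  -- mean-zero per entry
  have hvq : ∀ q : Fin n × Fin r, ∑ j, E (j, q) = 0 := by
    intro q
    have h0 := congrFun (congrFun he q.1) q.2
    rw [Matrix.sum_apply] at h0
    simpa [hE] using h0
  -- contraction of G
  have hGsq : ∑ p, G p ^ 2 ≤ (σ₂ ^ t) ^ 2 * ∑ p, E p ^ 2 := by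
    rw [Fintype.sum_prod_type, Finset.sum_comm]
    conv_rhs => rw [Fintype.sum_prod_type, Finset.sum_comm, Finset.mul_sum]
    refine Finset.sum_le_sum fun q _ => ?_
    have hb := pow_mulVec_bound_sq W hcol σ₂ hσ₂ t (fun j => E (j, q)) (hvq q)
    have hGv : ∀ i, G (i, q) = ((W ^ t) *ᵥ (fun j => E (j, q))) i := by
      intro i; simp [hG, Matrix.mulVec, dotProduct]
    simpa [hGv] using hb
  have hC : Real.sqrt (∑ p, G p ^ 2) ≤ σ₂ ^ t * Real.sqrt (∑ p, E p ^ 2) := by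
    have h := Real.sqrt_le_sqrt hGsq
    rwa [Real.sqrt_mul (sq_nonneg _), Real.sqrt_sq (pow_nonneg hσnn t)] at h
  -- centering bound on D
  have hDsq : ∑ p, D p ^ 2 ≤ ∑ p : Fin N × Fin n × Fin r,
      ((F (k+1) p.1 - F k p.1) p.2.1 p.2.2) ^ 2 := by
    rw [Fintype.sum_prod_type, Finset.sum_comm]
    conv_rhs => rw [Fintype.sum_prod_type, Finset.sum_comm]
    refine Finset.sum_le_sum fun q _ => ?_
    have hmean : ∀ i, D (i, q) = (F (k+1) i - F k i) q.1 q.2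
        - (N : ℝ)⁻¹ * ∑ j, (F (k+1) j - F k j) q.1 q.2 := by
      intro i
      simp only [hD, Matrix.sub_apply, hFbar, Matrix.smul_apply, Matrix.sum_apply,
        smul_eq_mul, Finset.sum_sub_distrib, mul_sub]
    simp_rw [hmean]
    exact centering_sum_sq _
  have hDroot : Real.sqrt (∑ p, D p ^ 2) ≤ Real.sqrt (∑ p : Fin N × Fin n × Fin r,
      ((F (k+1) p.1 - F k p.1) p.2.1 p.2.2) ^ 2) := Real.sqrt_le_sqrt hDsq
  rw [sum_frob_sq, sum_frob_sq, sum_frob_sq]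
  calc Real.sqrt (∑ p : Fin N × Fin n × Fin r, ((Y (k+1) p.1 - Fbar (k+1)) p.2.1 p.2.2) ^ 2)
      = Real.sqrt (∑ p, (G p + D p) ^ 2) := by
        congr 1
        refine Finset.sum_congr rfl fun p _ => ?_
        rw [hdec p.1]
        simp [hG, hD, hE, Matrix.add_apply, Matrix.sum_apply, Matrix.smul_apply,
          smul_eq_mul]
    _ ≤ Real.sqrt (∑ p, G p ^ 2) + Real.sqrt (∑ p, D p ^ 2) := sqrt_sum_sq_add_le G D
    _ ≤ σ₂ ^ t * Real.sqrt (∑ p, E p ^ 2) + Real.sqrt (∑ p : Fin N × Fin n × Fin r,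
          ((F (k+1) p.1 - F k p.1) p.2.1 p.2.2) ^ 2) := add_le_add hC hDroot

end
end
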